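/- arXiv:2602.14047 — 2 statements merged into one kernel-verified Lean document; each statement's English description precedes it below -/
import Mathlib

section
/- For every homogeneous polynomial p of degree n in d variables, |||p|||₁ ≤ |||p|||₂ ≤ √d · |||p|||₁. -/
noncomputable section
open scoped ComplexOrder
namespace WP

abbrev MvP (d : ℕ) := MvPolynomial (Fin d) ℂ

/-- The Cauchy pairing `⟨p,q⟩₂ = ∑_α a_α conj(b_α)` of coefficient vectors. -/
def pairing {d : ℕ} (p q : MvP d) : ℂ :=
  ∑ α ∈ p.support, p.coeff α * (starRingEnd ℂ) (q.coeff α)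

/-- The Hardy norm `‖p‖₂`: the `ℓ²` norm of the coefficient vector. -/
def norm2 {d : ℕ} (p : MvP d) : ℝ :=
  Real.sqrt (∑ α ∈ p.support, ‖p.coeff α‖ ^ 2)

/-- The weak product norm `‖p‖_{P_{d,k} ⊙ P_{d,l}}`. -/
def wpNorm (d k l : ℕ) (p : MvP d) : ℝ :=
  sInf {x : ℝ | ∃ (m : ℕ) (f g : Fin m → MvP d),
    (∀ j, (f j).IsHomogeneous k) ∧ (∀ j, (g j).IsHomogeneous l) ∧
    p = ∑ j, f j * g j ∧ x = ∑ j, norm2 (f j) * norm2 (g j)}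

/-- The weak product norm `‖p‖_{Z_d ⊙ P_{d,k} ⊙ P_{d,l}}`. -/
def zwpNorm (d k l : ℕ) (p : MvP d) : ℝ :=
  sInf {x : ℝ | ∃ f : Fin d → MvP d,
    (∀ i, (f i).IsHomogeneous (k + l)) ∧
    p = ∑ i, MvPolynomial.X i * f i ∧ x = ∑ i, wpNorm d k l (f i)}

/-- `|||p|||₁ = max_{0 ≤ k ≤ n} ‖p‖_{P_{d,k} ⊙ P_{d,n-k}}`. -/
def triple1 (d n : ℕ) (p : MvP d) : ℝ :=
  ⨆ k : Fin (n + 1), wpNorm d k (n - k) p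

/-- `|||p|||₂ = max_{0 ≤ k ≤ n-1} ‖p‖_{Z_d ⊙ P_{d,k} ⊙ P_{d,n-k-1}}`. -/
def triple2 (d n : ℕ) (p : MvP d) : ℝ :=
  ⨆ k : Fin n, zwpNorm d k (n - 1 - k) p

-- ====== auxiliary development ======
open MvPolynomial Finset

variable {d : ℕ}

def normSq (p : MvP d) : ℝ := ∑ α ∈ p.support, ‖p.coeff α‖ ^ 2

lemma norm2_eq_sqrt (p : MvP d) : norm2 p = Real.sqrt (normSq p) := rfl

lemma normSq_nonneg (p : MvP d) : 0 ≤ normSq p :=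
  Finset.sum_nonneg fun _ _ => by positivity

lemma norm2_nonneg (p : MvP d) : 0 ≤ norm2 p := Real.sqrt_nonneg _

lemma sq_norm2 (p : MvP d) : norm2 p ^ 2 = normSq p :=
  Real.sq_sqrt (normSq_nonneg p)

lemma normSq_eq_sum_superset {p : MvP d} {s : Finset (Fin d →₀ ℕ)} (hs : p.support ⊆ s) :
    normSq p = ∑ α ∈ s, ‖p.coeff α‖ ^ 2 :=
  Finset.sum_subset hs (fun α _ hα => by
    rw [MvPolynomial.notMem_support_iff.mp hα]; simp)

lemma normSq_X_mul (i : Fin d) (p : MvP d) : normSq (MvPolynomial.X i * p) = normSq p := by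
  rw [normSq, MvPolynomial.support_X_mul, Finset.sum_map]
  refine Finset.sum_congr rfl fun α _ => ?_
  simp [addLeftEmbedding_apply, MvPolynomial.coeff_X_mul]

lemma norm2_X_mul (i : Fin d) (p : MvP d) : norm2 (MvPolynomial.X i * p) = norm2 p := by
  rw [norm2_eq_sqrt, norm2_eq_sqrt, normSq_X_mul]

def wpSet (d k l : ℕ) (p : MvP d) : Set ℝ :=
  {x : ℝ | ∃ (m : ℕ) (f g : Fin m → MvP d),
    (∀ j, (f j).IsHomogeneous k) ∧ (∀ j, (g j).IsHomogeneous l) ∧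
    p = ∑ j, f j * g j ∧ x = ∑ j, norm2 (f j) * norm2 (g j)}

lemma wpNorm_eq (d k l : ℕ) (p : MvP d) : wpNorm d k l p = sInf (wpSet d k l p) := rfl

def zwpSet (d k l : ℕ) (p : MvP d) : Set ℝ :=
  {x : ℝ | ∃ f : Fin d → MvP d,
    (∀ i, (f i).IsHomogeneous (k + l)) ∧
    p = ∑ i, MvPolynomial.X i * f i ∧ x = ∑ i, wpNorm d k l (f i)}

lemma zwpNorm_eq (d k l : ℕ) (p : MvP d) : zwpNorm d k l p = sInf (zwpSet d k l p) := rfl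

lemma wpSet_bddBelow (d k l : ℕ) (p : MvP d) : BddBelow (wpSet d k l p) := by
  refine ⟨0, ?_⟩
  rintro x ⟨m, f, g, _, _, _, rfl⟩
  exact Finset.sum_nonneg fun j _ => mul_nonneg (norm2_nonneg _) (norm2_nonneg _)

lemma mem_wpSet_of_decomp (d k l : ℕ) {ι : Type} [Fintype ι] (f g : ι → MvP d)
    (hf : ∀ j, (f j).IsHomogeneous k) (hg : ∀ j, (g j).IsHomogeneous l) :
    (∑ j, norm2 (f j) * norm2 (g j)) ∈ wpSet d k l (∑ j, f j * g j) := by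
  classical
  let e := Fintype.equivFin ι
  refine ⟨Fintype.card ι, f ∘ e.symm, g ∘ e.symm, fun j => hf _, fun j => hg _, ?_, ?_⟩
  · rw [← Equiv.sum_comp e.symm (fun j => f j * g j)]; rfl
  · rw [← Equiv.sum_comp e.symm (fun j => norm2 (f j) * norm2 (g j))]; rfl

lemma wpNorm_le_decomp (d k l : ℕ) {ι : Type} [Fintype ι] (f g : ι → MvP d)
    (hf : ∀ j, (f j).IsHomogeneous k) (hg : ∀ j, (g j).IsHomogeneous l) :
    wpNorm d k l (∑ j, f j * g j) ≤ ∑ j, norm2 (f j) * norm2 (g j) := by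
  rw [wpNorm_eq]
  exact csInf_le (wpSet_bddBelow _ _ _ _) (mem_wpSet_of_decomp d k l f g hf hg)

-- picking a variable occurring in a multi-index
def pick (hd : 1 ≤ d) (α : Fin d →₀ ℕ) : Fin d :=
  if h : ∃ i, α i ≠ 0 then h.choose else ⟨0, hd⟩

lemma pick_spec (hd : 1 ≤ d) {α : Fin d →₀ ℕ} (hα : α ≠ 0) : α (pick hd α) ≠ 0 := by
  have h : ∃ i, α i ≠ 0 := by
    by_contra hcon
    push_neg at hcon
    exact hα (Finsupp.ext fun i => hcon i)
  rw [pick, dif_pos h]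
  exact h.choose_spec

lemma degree_add' (a b : Fin d →₀ ℕ) : (a + b).degree = a.degree + b.degree := by
  rw [Finsupp.degree_eq_weight_one]
  exact map_add _ a b

lemma degree_single_one (i : Fin d) : (Finsupp.single i 1).degree = 1 := by
  exact Finsupp.degree_single i 1

/-- Splitting off one variable from each monomial. -/
lemma exists_split (hd : 1 ≤ d) {m : ℕ} {q : MvP d} (hq : q.IsHomogeneous (m + 1)) :
    ∃ Q : Fin d → MvP d, (∀ i, (Q i).IsHomogeneous m) ∧
      q = ∑ i, MvPolynomial.X i * Q i ∧ ∑ i, normSq (Q i) = normSq q := by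
  classical
  set Q : Fin d → MvP d := fun i =>
    ∑ α ∈ q.support.filter (fun α => pick hd α = i),
      monomial (α - Finsupp.single i 1) (q.coeff α) with hQ
  have hdeg : ∀ α ∈ q.support, α.degree = m + 1 := by
    intro α hα
    have := hq (MvPolynomial.mem_support_iff.mp hα)
    rw [Finsupp.degree_eq_weight_one]; exact this
  have hne : ∀ α ∈ q.support, α ≠ 0 := by
    intro α hα h0
    have := hdeg α hα
    rw [h0, map_zero] at this
    omega
  have hle : ∀ α ∈ q.support, Finsupp.single (pick hd α) 1 ≤ α := fun α hα =>
    Finsupp.single_le_iff.mpr (Nat.one_le_iff_ne_zero.mpr (pick_spec hd (hne α hα)))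
  have hcancel : ∀ α ∈ q.support, Finsupp.single (pick hd α) 1 + (α - Finsupp.single (pick hd α) 1) = α :=
    fun α hα => add_tsub_cancel_of_le (hle α hα)
  have hdegsub : ∀ α ∈ q.support, (α - Finsupp.single (pick hd α) 1).degree = m := by
    intro α hα
    have h1 := congrArg Finsupp.degree (hcancel α hα)
    rw [degree_add', degree_single_one, hdeg α hα] at h1
    omega
  have hinj : ∀ i : Fin d, ∀ α ∈ q.support.filter (fun α => pick hd α = i),
      ∀ β ∈ q.support.filter (fun α => pick hd α = i),
      α - Finsupp.single i 1 = β - Finsupp.single i 1 → α = β := by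
    intro i α hα β hβ hab
    rw [Finset.mem_filter] at hα hβ
    have h1 := hcancel α hα.1; rw [hα.2] at h1
    have h2 := hcancel β hβ.1; rw [hβ.2] at h2
    rw [← h1, ← h2, hab]
  refine ⟨Q, ?_, ?_, ?_⟩
  · intro i
    refine MvPolynomial.IsHomogeneous.sum _ _ _ fun α hα => ?_
    rw [Finset.mem_filter] at hα
    refine isHomogeneous_monomial _ ?_
    rw [← hα.2]
    exact hdegsub α hα.1
  · have : ∀ i : Fin d, MvPolynomial.X i * Q i =
        ∑ α ∈ q.support.filter (fun α => pick hd α = i), monomial α (q.coeff α) := by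
      intro i
      rw [hQ, Finset.mul_sum]
      refine Finset.sum_congr rfl fun α hα => ?_
      rw [Finset.mem_filter] at hα
      rw [MvPolynomial.X, MvPolynomial.monomial_mul, one_mul, ← hα.2]
      exact congrArg (fun β => (monomial β) (q.coeff α)) (hcancel α hα.1)
    rw [Finset.sum_congr rfl (fun i _ => this i),
      Finset.sum_fiberwise_of_maps_to (fun α _ => Finset.mem_univ (pick hd α)),
      MvPolynomial.support_sum_monomial_coeff]
  · have hcoeff : ∀ i : Fin d, ∀ α ∈ q.support.filter (fun α => pick hd α = i),
        (Q i).coeff (α - Finsupp.single i 1) = q.coeff α := by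
      intro i α hα
      rw [hQ, MvPolynomial.coeff_sum]
      rw [Finset.sum_eq_single_of_mem α hα]
      · rw [MvPolynomial.coeff_monomial, if_pos rfl]
      · intro β hβ hne'
        rw [MvPolynomial.coeff_monomial, if_neg]
        intro h
        exact hne' (hinj i β hβ α hα h)
    have hnsq : ∀ i : Fin d, normSq (Q i) =
        ∑ α ∈ q.support.filter (fun α => pick hd α = i), ‖q.coeff α‖ ^ 2 := by
      intro i
      have hsupp : (Q i).support ⊆
          (q.support.filter (fun α => pick hd α = i)).image (fun α => α - Finsupp.single i 1) := by
        rw [hQ]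
        refine Finset.Subset.trans MvPolynomial.support_sum ?_
        intro β hβ
        rw [Finset.mem_biUnion] at hβ
        obtain ⟨α, hα, hβ'⟩ := hβ
        have := MvPolynomial.support_monomial_subset hβ'
        rw [Finset.mem_singleton] at this
        exact Finset.mem_image.mpr ⟨α, hα, this.symm⟩
      rw [normSq_eq_sum_superset hsupp, Finset.sum_image (hinj i)]
      exact Finset.sum_congr rfl fun α hα => by rw [hcoeff i α hα]
    rw [Finset.sum_congr rfl (fun i _ => hnsq i),
      Finset.sum_fiberwise_of_maps_to (fun α _ => Finset.mem_univ (pick hd α))]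
    rfl

lemma sum_norm2_le (hd : 1 ≤ d) {f : MvP d} {Q : Fin d → MvP d}
    (hsum : ∑ i, normSq (Q i) = normSq f) :
    ∑ i, norm2 (Q i) ≤ Real.sqrt d * norm2 f := by
  have h0 : (0:ℝ) ≤ ∑ i, norm2 (Q i) := Finset.sum_nonneg fun i _ => norm2_nonneg _
  have hcs : (∑ i, norm2 (Q i)) ^ 2 ≤ (d : ℝ) * ∑ i, norm2 (Q i) ^ 2 := by
    simpa using sq_sum_le_card_mul_sum_sq (s := Finset.univ) (f := fun i => norm2 (Q i))
  have h2 : ∑ i, norm2 (Q i) ^ 2 = normSq f := by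
    rw [← hsum]; exact Finset.sum_congr rfl fun i _ => sq_norm2 _
  rw [h2] at hcs
  calc ∑ i, norm2 (Q i) = Real.sqrt ((∑ i, norm2 (Q i)) ^ 2) := (Real.sqrt_sq h0).symm
    _ ≤ Real.sqrt ((d : ℝ) * normSq f) := Real.sqrt_le_sqrt hcs
    _ = Real.sqrt d * norm2 f := by
        rw [Real.sqrt_mul (by positivity), norm2_eq_sqrt]

lemma wpSet_nonempty (hd : 1 ≤ d) (k : ℕ) :
    ∀ (l : ℕ) (q : MvP d), q.IsHomogeneous (k + l) → (wpSet d k l q).Nonempty := by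
  induction k with
  | zero =>
    intro l q hq
    have hmem := mem_wpSet_of_decomp d 0 l (ι := Fin 1) (fun _ => 1) (fun _ => q)
      (fun _ => MvPolynomial.isHomogeneous_one _ _) (fun _ => by rwa [zero_add] at hq)
    have heq : (∑ _j : Fin 1, (1 : MvP d) * q) = q := by simp
    rw [heq] at hmem
    exact ⟨_, hmem⟩
  | succ k ih =>
    intro l q hq
    have hq' : q.IsHomogeneous (k + l + 1) := by rwa [show k+1+l = k+l+1 by omega] at hq
    obtain ⟨Q, hQ, hqsum, -⟩ := exists_split hd hq'
    have h : ∀ i : Fin d, ∃ (m : ℕ) (f g : Fin m → MvP d),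
        (∀ j, (f j).IsHomogeneous k) ∧ (∀ j, (g j).IsHomogeneous l) ∧
        Q i = ∑ j, f j * g j ∧
        (fun i => (ih l (Q i) (hQ i)).choose) i = ∑ j, norm2 (f j) * norm2 (g j) :=
      fun i => (ih l (Q i) (hQ i)).choose_spec
    choose m f g hf hg hQd hx using h
    have hF : ∀ ij : (Σ i : Fin d, Fin (m i)),
        (MvPolynomial.X ij.1 * f ij.1 ij.2).IsHomogeneous (k + 1) := by
      intro ij
      have := (MvPolynomial.isHomogeneous_X ℂ ij.1).mul (hf ij.1 ij.2)
      rwa [add_comm] at this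
    have hdecomp : q = ∑ ij : (Σ i : Fin d, Fin (m i)),
        (MvPolynomial.X ij.1 * f ij.1 ij.2) * g ij.1 ij.2 := by
      have h1 : q = ∑ i, ∑ j, MvPolynomial.X i * f i j * g i j := by
        rw [hqsum]
        refine Finset.sum_congr rfl fun i _ => ?_
        rw [hQd i, Finset.mul_sum]
        exact Finset.sum_congr rfl fun j _ => (mul_assoc _ _ _).symm
      have h2 := Finset.sum_sigma' (univ : Finset (Fin d)) (fun _ => univ)
        (fun i j => MvPolynomial.X i * f i j * g i j)
      rw [Finset.univ_sigma_univ] at h2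
      rw [h1, ← h2]
    have hmem := mem_wpSet_of_decomp d (k+1) l
      (fun ij : (Σ i : Fin d, Fin (m i)) => MvPolynomial.X ij.1 * f ij.1 ij.2)
      (fun ij => g ij.1 ij.2) hF (fun ij => hg ij.1 ij.2)
    rw [← hdecomp] at hmem
    exact ⟨_, hmem⟩

lemma wpNorm_nonneg (d k l : ℕ) (p : MvP d) : 0 ≤ wpNorm d k l p := by
  rw [wpNorm_eq]
  refine Real.sInf_nonneg ?_
  rintro x ⟨m, f, g, _, _, _, rfl⟩
  exact Finset.sum_nonneg fun j _ => mul_nonneg (norm2_nonneg _) (norm2_nonneg _)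

lemma zwpSet_bddBelow (d k l : ℕ) (p : MvP d) : BddBelow (zwpSet d k l p) := by
  refine ⟨0, ?_⟩
  rintro x ⟨F, hF, hpF, rfl⟩
  exact Finset.sum_nonneg fun i _ => wpNorm_nonneg d k l (F i)

lemma zwpSet_nonempty (hd : 1 ≤ d) (k l : ℕ) {p : MvP d} (hp : p.IsHomogeneous (k + l + 1)) :
    (zwpSet d k l p).Nonempty := by
  obtain ⟨Q, hQ, hsum, -⟩ := exists_split hd hp
  exact ⟨∑ i, wpNorm d k l (Q i), Q, hQ, hsum, rfl⟩

/-- Core of inequality 1, with the variable attached on the right factor. -/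
lemma wpNorm_le_zwpNorm_right (hd : 1 ≤ d) (k l : ℕ) {p : MvP d}
    (hp : p.IsHomogeneous (k + l + 1)) :
    wpNorm d k (l + 1) p ≤ zwpNorm d k l p := by
  rw [zwpNorm_eq]
  refine le_csInf (zwpSet_nonempty hd k l hp) ?_
  rintro t ⟨F, hF, hpF, rfl⟩
  refine le_of_forall_pos_le_add ?_
  intro ε hε
  have hd0 : (0:ℝ) < d := by exact_mod_cast hd
  have hchoice : ∀ i : Fin d, ∃ x ∈ wpSet d k l (F i), x < wpNorm d k l (F i) + ε / d := by
    intro i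
    have := Real.lt_sInf_add_pos (wpSet_nonempty hd k l (F i) (hF i))
      (show (0:ℝ) < ε / d by positivity)
    rw [← wpNorm_eq] at this
    exact this
  choose x hx hxlt using hchoice
  have hmem : ∀ i : Fin d, ∃ (m : ℕ) (f g : Fin m → MvP d),
      (∀ j, (f j).IsHomogeneous k) ∧ (∀ j, (g j).IsHomogeneous l) ∧
      F i = ∑ j, f j * g j ∧ x i = ∑ j, norm2 (f j) * norm2 (g j) := hx
  choose m f g hf hg hFd hxval using hmem
  have hG : ∀ ij : (Σ i : Fin d, Fin (m i)),
      (MvPolynomial.X ij.1 * g ij.1 ij.2).IsHomogeneous (l + 1) := by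
    intro ij
    have := (MvPolynomial.isHomogeneous_X ℂ ij.1).mul (hg ij.1 ij.2)
    rwa [add_comm] at this
  have hdecomp : p = ∑ ij : (Σ i : Fin d, Fin (m i)),
      f ij.1 ij.2 * (MvPolynomial.X ij.1 * g ij.1 ij.2) := by
    have h1 : p = ∑ i, ∑ j, f i j * (MvPolynomial.X i * g i j) := by
      rw [hpF]
      refine Finset.sum_congr rfl fun i _ => ?_
      rw [hFd i, Finset.mul_sum]
      refine Finset.sum_congr rfl fun j _ => ?_
      ring
    have h2 := Finset.sum_sigma' (univ : Finset (Fin d)) (fun _ => univ)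
      (fun i j => f i j * (MvPolynomial.X i * g i j))
    rw [Finset.univ_sigma_univ] at h2
    rw [h1, ← h2]
  have hle := wpNorm_le_decomp d k (l + 1)
    (fun ij : (Σ i : Fin d, Fin (m i)) => f ij.1 ij.2)
    (fun ij => MvPolynomial.X ij.1 * g ij.1 ij.2) (fun ij => hf ij.1 ij.2) hG
  rw [← hdecomp] at hle
  refine hle.trans ?_
  have h3 : ∑ ij : (Σ i : Fin d, Fin (m i)),
      norm2 (f ij.1 ij.2) * norm2 (MvPolynomial.X ij.1 * g ij.1 ij.2) = ∑ i, x i := by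
    have h2 := Finset.sum_sigma' (univ : Finset (Fin d)) (fun _ => univ)
      (fun i j => norm2 (f i j) * norm2 (MvPolynomial.X i * g i j))
    rw [Finset.univ_sigma_univ] at h2
    rw [← h2]
    refine Finset.sum_congr rfl fun i _ => ?_
    rw [hxval i]
    exact Finset.sum_congr rfl fun j _ => by rw [norm2_X_mul]
  rw [h3]
  have h4 : ∑ i, x i ≤ ∑ i : Fin d, (wpNorm d k l (F i) + ε / d) :=
    Finset.sum_le_sum fun i _ => (hxlt i).le
  refine h4.trans ?_
  rw [Finset.sum_add_distrib, Finset.sum_const, Finset.card_univ, Fintype.card_fin,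
    nsmul_eq_mul]
  rw [mul_div_cancel₀ ε (ne_of_gt hd0)]

/-- Core of inequality 1, with the variable attached on the left factor. -/
lemma wpNorm_le_zwpNorm_left (hd : 1 ≤ d) (k l : ℕ) {p : MvP d}
    (hp : p.IsHomogeneous (k + l + 1)) :
    wpNorm d (k + 1) l p ≤ zwpNorm d k l p := by
  rw [zwpNorm_eq]
  refine le_csInf (zwpSet_nonempty hd k l hp) ?_
  rintro t ⟨F, hF, hpF, rfl⟩
  refine le_of_forall_pos_le_add ?_
  intro ε hε
  have hd0 : (0:ℝ) < d := by exact_mod_cast hd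
  have hchoice : ∀ i : Fin d, ∃ x ∈ wpSet d k l (F i), x < wpNorm d k l (F i) + ε / d := by
    intro i
    have := Real.lt_sInf_add_pos (wpSet_nonempty hd k l (F i) (hF i))
      (show (0:ℝ) < ε / d by positivity)
    rw [← wpNorm_eq] at this
    exact this
  choose x hx hxlt using hchoice
  have hmem : ∀ i : Fin d, ∃ (m : ℕ) (f g : Fin m → MvP d),
      (∀ j, (f j).IsHomogeneous k) ∧ (∀ j, (g j).IsHomogeneous l) ∧
      F i = ∑ j, f j * g j ∧ x i = ∑ j, norm2 (f j) * norm2 (g j) := hx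
  choose m f g hf hg hFd hxval using hmem
  have hG : ∀ ij : (Σ i : Fin d, Fin (m i)),
      (MvPolynomial.X ij.1 * f ij.1 ij.2).IsHomogeneous (k + 1) := by
    intro ij
    have := (MvPolynomial.isHomogeneous_X ℂ ij.1).mul (hf ij.1 ij.2)
    rwa [add_comm] at this
  have hdecomp : p = ∑ ij : (Σ i : Fin d, Fin (m i)),
      (MvPolynomial.X ij.1 * f ij.1 ij.2) * g ij.1 ij.2 := by
    have h1 : p = ∑ i, ∑ j, (MvPolynomial.X i * f i j) * g i j := by
      rw [hpF]
      refine Finset.sum_congr rfl fun i _ => ?_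
      rw [hFd i, Finset.mul_sum]
      refine Finset.sum_congr rfl fun j _ => ?_
      ring
    have h2 := Finset.sum_sigma' (univ : Finset (Fin d)) (fun _ => univ)
      (fun i j => (MvPolynomial.X i * f i j) * g i j)
    rw [Finset.univ_sigma_univ] at h2
    rw [h1, ← h2]
  have hle := wpNorm_le_decomp d (k + 1) l
    (fun ij : (Σ i : Fin d, Fin (m i)) => MvPolynomial.X ij.1 * f ij.1 ij.2)
    (fun ij => g ij.1 ij.2) hG (fun ij => hg ij.1 ij.2)
  rw [← hdecomp] at hle
  refine hle.trans ?_
  have h3 : ∑ ij : (Σ i : Fin d, Fin (m i)),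
      norm2 (MvPolynomial.X ij.1 * f ij.1 ij.2) * norm2 (g ij.1 ij.2) = ∑ i, x i := by
    have h2 := Finset.sum_sigma' (univ : Finset (Fin d)) (fun _ => univ)
      (fun i j => norm2 (MvPolynomial.X i * f i j) * norm2 (g i j))
    rw [Finset.univ_sigma_univ] at h2
    rw [← h2]
    refine Finset.sum_congr rfl fun i _ => ?_
    rw [hxval i]
    exact Finset.sum_congr rfl fun j _ => by rw [norm2_X_mul]
  rw [h3]
  have h4 : ∑ i, x i ≤ ∑ i : Fin d, (wpNorm d k l (F i) + ε / d) :=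
    Finset.sum_le_sum fun i _ => (hxlt i).le
  refine h4.trans ?_
  rw [Finset.sum_add_distrib, Finset.sum_const, Finset.card_univ, Fintype.card_fin,
    nsmul_eq_mul]
  rw [mul_div_cancel₀ ε (ne_of_gt hd0)]

/-- Core of inequality 2. -/
lemma zwpNorm_le_sqrt_d_wpNorm (hd : 1 ≤ d) (k l : ℕ) {p : MvP d}
    (hp : p.IsHomogeneous (k + 1 + l)) :
    zwpNorm d k l p ≤ Real.sqrt d * wpNorm d (k + 1) l p := by
  have hsqrt : (0:ℝ) < Real.sqrt d := Real.sqrt_pos.mpr (by exact_mod_cast hd)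
  have key : ∀ t ∈ wpSet d (k + 1) l p, zwpNorm d k l p ≤ Real.sqrt d * t := by
    rintro t ⟨mm, f, g, hf, hg, hpd, rfl⟩
    have hsplit : ∀ j : Fin mm, ∃ Q : Fin d → MvP d, (∀ i, (Q i).IsHomogeneous k) ∧
        f j = ∑ i, MvPolynomial.X i * Q i ∧ ∑ i, normSq (Q i) = normSq (f j) :=
      fun j => exists_split hd (hf j)
    choose Q hQ hfQ hQsum using hsplit
    set H : Fin d → MvP d := fun i => ∑ j, Q j i * g j with hH
    have hHhom : ∀ i, (H i).IsHomogeneous (k + l) :=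
      fun i => MvPolynomial.IsHomogeneous.sum _ _ _ fun j _ => (hQ j i).mul (hg j)
    have hpH : p = ∑ i, MvPolynomial.X i * H i := by
      rw [hpd]
      have h1 : ∀ j, f j * g j = ∑ i, MvPolynomial.X i * (Q j i * g j) := by
        intro j
        rw [hfQ j, Finset.sum_mul]
        exact Finset.sum_congr rfl fun i _ => mul_assoc _ _ _
      rw [Finset.sum_congr rfl fun j _ => h1 j, Finset.sum_comm]
      exact Finset.sum_congr rfl fun i _ => by rw [hH, Finset.mul_sum]
    have hz : zwpNorm d k l p ≤ ∑ i, wpNorm d k l (H i) := by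
      rw [zwpNorm_eq]
      exact csInf_le (zwpSet_bddBelow d k l p) ⟨H, hHhom, hpH, rfl⟩
    refine hz.trans ?_
    have hwp : ∀ i, wpNorm d k l (H i) ≤ ∑ j, norm2 (Q j i) * norm2 (g j) := by
      intro i
      have := wpNorm_le_decomp d k l (fun j => Q j i) g (fun j => hQ j i) hg
      simpa using this
    refine (Finset.sum_le_sum fun i _ => hwp i).trans ?_
    rw [Finset.sum_comm]
    have h5 : ∀ j, ∑ i, norm2 (Q j i) * norm2 (g j) ≤
        (Real.sqrt d * norm2 (f j)) * norm2 (g j) := by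
      intro j
      rw [← Finset.sum_mul]
      exact mul_le_mul_of_nonneg_right (sum_norm2_le hd (hQsum j)) (norm2_nonneg _)
    refine (Finset.sum_le_sum fun j _ => h5 j).trans ?_
    rw [Finset.mul_sum]
    exact le_of_eq (Finset.sum_congr rfl fun j _ => by ring)
  have h6 : zwpNorm d k l p / Real.sqrt d ≤ wpNorm d (k + 1) l p := by
    rw [wpNorm_eq]
    refine le_csInf (wpSet_nonempty hd (k + 1) l p hp) ?_
    intro t ht
    rw [div_le_iff₀ hsqrt]
    rw [mul_comm]
    exact key t ht
  calc zwpNorm d k l p = Real.sqrt d * (zwpNorm d k l p / Real.sqrt d) := by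
        field_simp
    _ ≤ Real.sqrt d * wpNorm d (k + 1) l p :=
        mul_le_mul_of_nonneg_left h6 (le_of_lt hsqrt)

/-- Theorem 6.1 (second part) / Lemma 6.2: `|||p|||₁ ≤ |||p|||₂ ≤ √d |||p|||₁`. -/
theorem triple1_le_triple2_le_sqrt_d_triple1 (d n : ℕ) (hd : 1 ≤ d) (hn : 1 ≤ n)
    (p : MvP d) (hp : p.IsHomogeneous n) :
    triple1 d n p ≤ triple2 d n p ∧
      triple2 d n p ≤ Real.sqrt d * triple1 d n p := by
  haveI : Nonempty (Fin n) := ⟨⟨0, hn⟩⟩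
  have bdd2 : BddAbove (Set.range fun k' : Fin n => zwpNorm d k' (n - 1 - k') p) :=
    Set.Finite.bddAbove (Set.finite_range _)
  have bdd1 : BddAbove (Set.range fun k' : Fin (n + 1) => wpNorm d k' (n - k') p) :=
    Set.Finite.bddAbove (Set.finite_range _)
  constructor
  · rw [triple1]
    refine ciSup_le fun k => ?_
    by_cases hk : (k : ℕ) < n
    · have e1 : n - (k : ℕ) = (n - 1 - (k : ℕ)) + 1 := by omega
      have e2 : (k : ℕ) + (n - 1 - (k : ℕ)) + 1 = n := by omega
      have hp' : p.IsHomogeneous ((k : ℕ) + (n - 1 - (k : ℕ)) + 1) := by rwa [e2]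
      have h := wpNorm_le_zwpNorm_right hd (k : ℕ) (n - 1 - (k : ℕ)) hp'
      rw [← e1] at h
      refine h.trans ?_
      have h2 := le_ciSup bdd2 (⟨(k : ℕ), hk⟩ : Fin n)
      exact h2
    · have hkn : (k : ℕ) = n := by have := k.2; omega
      rw [hkn, Nat.sub_self]
      have e2 : (n - 1) + 0 + 1 = n := by omega
      have hp' : p.IsHomogeneous ((n - 1) + 0 + 1) := by rwa [e2]
      have h := wpNorm_le_zwpNorm_left hd (n - 1) 0 hp'
      rw [show n - 1 + 1 = n by omega] at h
      refine h.trans ?_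
      have h2 := le_ciSup bdd2 (⟨n - 1, by omega⟩ : Fin n)
      simp only at h2
      rw [show n - 1 - (n - 1) = 0 from Nat.sub_self _] at h2
      exact h2
  · rw [triple2]
    refine ciSup_le fun k => ?_
    have e2 : (k : ℕ) + 1 + (n - 1 - (k : ℕ)) = n := by have := k.2; omega
    have hp' : p.IsHomogeneous ((k : ℕ) + 1 + (n - 1 - (k : ℕ))) := by rwa [e2]
    have h := zwpNorm_le_sqrt_d_wpNorm hd (k : ℕ) (n - 1 - (k : ℕ)) hp'
    refine h.trans ?_
    refine mul_le_mul_of_nonneg_left ?_ (Real.sqrt_nonneg _)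
    have h2 := le_ciSup bdd1 (⟨(k : ℕ) + 1, by have := k.2; omega⟩ : Fin (n + 1))
    simp only at h2
    rw [show n - ((k : ℕ) + 1) = n - 1 - (k : ℕ) by omega] at h2
    exact h2

end WP
end
end

section
/- Let d ∈ ℕ, d ≥ 1. There exists a constant C_d ≤ binomial(2d−2, d−1) such that for all n ∈ ℕ there exists a subset G of {β ∈ ℕ^d : |β| ≥ n/2} with |G| ≤ C_d such that for each multi-index α ∈ ℕ^d with |α| = n there exists β ∈ G with β ≤ α componentwise. -/
/-- Subselection lemma: from a tuple with large sum we can extract a smaller tuple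
with any prescribed smaller sum. -/
lemma exists_le_sum_eq {d : ℕ} (m : ℕ) :
    ∀ (c : ℕ) (t : Fin d → ℕ), ∑ i, t i = m + c →
      ∃ k : Fin d → ℕ, (∀ j, k j ≤ t j) ∧ ∑ i, k i = m := by
  intro c
  induction c with
  | zero => intro t ht; exact ⟨t, fun j => le_rfl, by simpa using ht⟩
  | succ c ih =>
    intro t ht
    have hpos : 0 < ∑ i, t i := by omega
    obtain ⟨j, -, hj⟩ := Finset.exists_lt_of_sum_lt (f := fun _ : Fin d => 0)
      (by simpa using hpos)
    have hj' : 0 < t j := hj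
    set t' : Fin d → ℕ := Function.update t j (t j - 1) with ht'
    have hsplit : t j + ∑ i ∈ Finset.univ \ {j}, t i = ∑ i, t i := by
      rw [Finset.sdiff_singleton_eq_erase, Finset.add_sum_erase]
      exact Finset.mem_univ j
    have hsum : ∑ i, t' i = m + c := by
      rw [ht', Finset.sum_update_of_mem (Finset.mem_univ j)]
      omega
    obtain ⟨k, hk1, hk2⟩ := ih t' hsum
    refine ⟨k, fun i => ?_, hk2⟩
    refine (hk1 i).trans ?_
    rw [ht']
    by_cases hij : i = j
    · subst hij; simp
    · simp [Function.update_of_ne hij]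

lemma multiset_card_finset_sum {ι α : Type*} (s : Finset ι) (g : ι → Multiset α) :
    Multiset.card (∑ i ∈ s, g i) = ∑ i ∈ s, Multiset.card (g i) := by
  classical
  induction s using Finset.induction with
  | empty => simp
  | insert _ _ h ih => simp [Finset.sum_insert h, ih]

lemma card_antidiagonalTuple_le (d m : ℕ) (hd : 0 < d) :
    (Finset.Nat.antidiagonalTuple d m).card ≤ Nat.choose (d + m - 1) m := by
  classical
  set f : (Fin d → ℕ) → Multiset (Fin d) := fun k => ∑ i, Multiset.replicate (k i) i with hf
  have hcount : ∀ k : Fin d → ℕ, ∀ j, (f k).count j = k j := by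
    intro k j
    rw [hf]
    simp only
    rw [Multiset.count_sum', Finset.sum_eq_single j]
    · simp [Multiset.count_replicate]
    · intro i _ hij; simp [Multiset.count_replicate, hij]
    · intro h; exact absurd (Finset.mem_univ j) h
  have hcard : ∀ k ∈ Finset.Nat.antidiagonalTuple d m, Multiset.card (f k) = m := by
    intro k hk
    rw [hf]
    simp only
    rw [multiset_card_finset_sum]
    simpa using Finset.Nat.mem_antidiagonalTuple.mp hk
  have key : (Finset.Nat.antidiagonalTuple d m).card ≤ Fintype.card (Sym (Fin d) m) := by
    rw [← Finset.card_univ (α := Sym (Fin d) m)]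
    refine Finset.card_le_card_of_injOn
      (fun k => if h : Multiset.card (f k) = m then (⟨f k, h⟩ : Sym (Fin d) m)
        else Sym.replicate m ⟨0, hd⟩) (fun k _ => Finset.mem_univ _) ?_
    intro k1 h1 k2 h2 heq
    simp only [dif_pos (hcard k1 h1), dif_pos (hcard k2 h2)] at heq
    have hmul : f k1 = f k2 := by
      have := congrArg Subtype.val heq
      simpa [hcard k1 h1, hcard k2 h2] using this
    funext j
    rw [← hcount k1 j, ← hcount k2 j, hmul]
  calc (Finset.Nat.antidiagonalTuple d m).card ≤ Fintype.card (Sym (Fin d) m) := key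
    _ = Nat.choose (d + m - 1) m := by
        rw [Sym.card_sym_eq_choose, Fintype.card_fin]

/-- Lemma 6.6: a discrete covering lemma.  There is `C_d ≤ binom(2d-2, d-1)` such
that for every `n` there is a set `G` of multi-indices of length `≥ n/2`, of
cardinality at most `C_d`, such that every multi-index of length `n` dominates
some element of `G` componentwise. -/
theorem multiindex_covering (d : ℕ) (hd : 1 ≤ d) :
    ∃ C : ℕ, C ≤ Nat.choose (2 * d - 2) (d - 1) ∧
      ∀ n : ℕ, ∃ G : Finset (Fin d → ℕ),
        (∀ β ∈ G, (n : ℝ) / 2 ≤ (∑ i, β i : ℕ)) ∧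
        G.card ≤ C ∧
        ∀ α : Fin d → ℕ, (∑ i, α i) = n → ∃ β ∈ G, ∀ j, β j ≤ α j := by
  refine ⟨Nat.choose (2 * d - 2) (d - 1), le_rfl, fun n => ?_⟩
  rcases eq_or_lt_of_le hd with hd1 | hd2
  · -- d = 1
    subst hd1
    refine ⟨{fun _ => n}, ?_, ?_, ?_⟩
    · intro β hβ
      rw [Finset.mem_singleton] at hβ
      subst hβ
      simp only [Fin.sum_univ_one]
      have : (0:ℝ) ≤ n := Nat.cast_nonneg n
      linarith
    · simp
    · intro α hα
      refine ⟨fun _ => n, Finset.mem_singleton_self _, fun j => ?_⟩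
      have hj : j = 0 := Subsingleton.elim _ _
      subst hj
      rw [Fin.sum_univ_one] at hα
      exact hα.ge
  · -- d ≥ 2
    obtain ⟨m, rfl⟩ : ∃ m, d = m + 2 := ⟨d - 2, by omega⟩
    set e : ℕ := 2 * m + 2 with he
    have hepos : 0 < e := by omega
    refine ⟨(Finset.Nat.antidiagonalTuple (m + 2) (m + 1)).image
      (fun k j => (k j * n) ⌈/⌉ e), ?_, ?_, ?_⟩
    · -- length lower bound
      intro β hβ
      obtain ⟨k, hk, rfl⟩ := Finset.mem_image.mp hβ
      have hks : ∑ i, k i = m + 1 := Finset.Nat.mem_antidiagonalTuple.mp hk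
      have hkey : ∀ i : Fin (m + 2), k i * n ≤ e * ((k i * n) ⌈/⌉ e) := fun i => by
        simpa [smul_eq_mul] using le_smul_ceilDiv (b := k i * n) hepos
      have hsum : (m + 1) * n ≤ e * ∑ i, (k i * n) ⌈/⌉ e := by
        calc (m + 1) * n = ∑ i, k i * n := by rw [← Finset.sum_mul, hks]
          _ ≤ ∑ i, e * ((k i * n) ⌈/⌉ e) := Finset.sum_le_sum fun i _ => hkey i
          _ = e * ∑ i, (k i * n) ⌈/⌉ e := by rw [Finset.mul_sum]
      have h2 : n ≤ 2 * ∑ i, (k i * n) ⌈/⌉ e := by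
        refine Nat.le_of_mul_le_mul_left ?_ (Nat.succ_pos m)
        calc (m + 1) * n ≤ e * ∑ i, (k i * n) ⌈/⌉ e := hsum
          _ = (m + 1) * (2 * ∑ i, (k i * n) ⌈/⌉ e) := by rw [he]; ring
      rw [div_le_iff₀ (by norm_num : (0:ℝ) < 2)]
      have hcast : (n : ℝ) ≤ ((2 * ∑ i, (k i * n) ⌈/⌉ e : ℕ) : ℝ) := Nat.cast_le.mpr h2
      push_cast at hcast ⊢
      linarith
    · -- cardinality
      have hle := card_antidiagonalTuple_le (m + 2) (m + 1) (by omega)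
      have h1 : m + 2 + (m + 1) - 1 = 2 * (m + 2) - 2 := by omega
      have h2 : m + 1 = (m + 2) - 1 := by omega
      rw [h1, h2] at hle
      exact Finset.card_image_le.trans hle
    · -- covering
      intro α hα
      rcases Nat.eq_zero_or_pos n with hn | hn
      · set k0 : Fin (m + 2) → ℕ := fun j => if j = 0 then m + 1 else 0 with hk0
        have hk0mem : k0 ∈ Finset.Nat.antidiagonalTuple (m + 2) (m + 1) := by
          rw [Finset.Nat.mem_antidiagonalTuple, hk0]
          simp
        refine ⟨fun j => (k0 j * n) ⌈/⌉ e, Finset.mem_image_of_mem _ hk0mem, fun j => ?_⟩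
        subst hn
        simp
      · set t : Fin (m + 2) → ℕ := fun j => α j * e / n with ht
        have htineq : ∀ j, α j * e ≤ n * t j + (n - 1) := by
          intro j
          have hr : (α j * e) % n ≤ n - 1 := Nat.le_pred_of_lt (Nat.mod_lt _ hn)
          calc α j * e = n * (α j * e / n) + (α j * e) % n := (Nat.div_add_mod _ _).symm
            _ ≤ n * t j + (n - 1) := Nat.add_le_add_left hr _
        have htsum : m + 1 ≤ ∑ i, t i := by
          by_contra hcon
          push_neg at hcon
          have hts : ∑ i, t i ≤ m := by omega
          have h1 : ∑ i, α i * e ≤ ∑ i, (n * t i + (n - 1)) :=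
            Finset.sum_le_sum fun i _ => htineq i
          rw [← Finset.sum_mul, hα] at h1
          rw [Finset.sum_add_distrib, ← Finset.mul_sum, Finset.sum_const] at h1
          simp only [Finset.card_univ, Fintype.card_fin, smul_eq_mul] at h1
          obtain ⟨n', rfl⟩ : ∃ n', n = n' + 1 := ⟨n - 1, by omega⟩
          have hmul : (n' + 1) * ∑ i, t i ≤ (n' + 1) * m := Nat.mul_le_mul_left _ hts
          rw [he] at h1
          simp only [Nat.add_sub_cancel] at h1
          nlinarith [h1, hmul]
        obtain ⟨c, hc⟩ := Nat.exists_eq_add_of_le htsum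
        obtain ⟨k, hk1, hk2⟩ := exists_le_sum_eq (m + 1) c t hc
        have hkmem : k ∈ Finset.Nat.antidiagonalTuple (m + 2) (m + 1) :=
          Finset.Nat.mem_antidiagonalTuple.mpr hk2
        refine ⟨fun j => (k j * n) ⌈/⌉ e, Finset.mem_image_of_mem _ hkmem, fun j => ?_⟩
        have hkn : k j * n ≤ α j * e := by
          have h1 : k j ≤ t j := hk1 j
          have h2 : t j * n ≤ α j * e := by
            rw [ht]
            simpa [mul_comm] using Nat.div_mul_le_self (α j * e) n
          calc k j * n ≤ t j * n := Nat.mul_le_mul_right n h1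
            _ ≤ α j * e := h2
        rw [ceilDiv_le_iff_le_smul hepos]
        simpa [smul_eq_mul, mul_comm] using hkn
end
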